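/- For the automaton A constructed from the graph G as above, the maximum size of a synchronizing set of states equals α(G) + 1, where α(G) is the maximum size of an independent set in G. -/

import Mathlib

def deltaStar {Q A : Type*} (δ : Q → A → Q) (q : Q) (w : List A) : Q :=
  w.foldl δ q

def IsSyncSet {Q A : Type*} (δ : Q → A → Q) (S : Set Q) : Prop :=
  ∃ (w : List A) (q : Q), ∀ s ∈ S, deltaStar δ s w = q

inductive St (p : ℕ) : Type where
  | s : Fin p → St p
  | t : Fin p → St p
  | f : St p
deriving DecidableEq

def gDelta {p : ℕ} (G : SimpleGraph (Fin p)) [DecidableRel G.Adj] :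
    St p → Fin p → St p
  | St.s i, j => if i = j then St.f else if G.Adj i j then St.t i else St.s i
  | St.t i, _ => St.t i
  | St.f, _ => St.f

variable {p : ℕ} (G : SimpleGraph (Fin p)) [DecidableRel G.Adj]

lemma deltaStar_cons {Q A : Type*} (δ : Q → A → Q) (q : Q) (a : A) (l : List A) :
    deltaStar δ q (a :: l) = deltaStar δ (δ q a) l := rfl

lemma f_fix (w : List (Fin p)) : deltaStar (gDelta G) St.f w = St.f := by
  induction w with
  | nil => rfl
  | cons a l ih => simpa [deltaStar, gDelta] using ih

lemma t_fix (i : Fin p) (w : List (Fin p)) :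
    deltaStar (gDelta G) (St.t i) w = St.t i := by
  induction w with
  | nil => rfl
  | cons a l ih => simpa [deltaStar, gDelta] using ih

lemma s_cases (i : Fin p) (w : List (Fin p)) :
    deltaStar (gDelta G) (St.s i) w = St.s i ∨
    deltaStar (gDelta G) (St.s i) w = St.t i ∨
    deltaStar (gDelta G) (St.s i) w = St.f := by
  induction w with
  | nil => left; rfl
  | cons a l ih =>
    simp only [deltaStar_cons]
    by_cases hia : i = a
    · right; right; simp [gDelta, hia, f_fix]
    · by_cases hA : G.Adj i a
      · right; left; simp [gDelta, hia, hA, t_fix]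
      · simpa [gDelta, hia, hA] using ih

lemma no_two_adj : ∀ (w : List (Fin p)) (i j : Fin p), G.Adj i j →
    deltaStar (gDelta G) (St.s i) w = St.f →
    deltaStar (gDelta G) (St.s j) w = St.f → False := by
  intro w
  induction w with
  | nil => intro i j _ hi _; simp [deltaStar] at hi
  | cons a l ih =>
    intro i j hadj hi hj
    have hi' : deltaStar (gDelta G) (gDelta G (St.s i) a) l = St.f := hi
    have hj' : deltaStar (gDelta G) (gDelta G (St.s j) a) l = St.f := hj
    by_cases hia : i = a
    · subst hia
      have hne : j ≠ i := fun h => G.irrefl (h ▸ hadj)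
      rw [show gDelta G (St.s j) i = St.t j by simp [gDelta, hne, G.adj_symm hadj]] at hj'
      rw [t_fix] at hj'; exact absurd hj' (by simp)
    · by_cases hja : j = a
      · subst hja
        have hne : i ≠ j := fun h => G.irrefl (h ▸ hadj)
        rw [show gDelta G (St.s i) j = St.t i by simp [gDelta, hne, hadj]] at hi'
        rw [t_fix] at hi'; exact absurd hi' (by simp)
      · by_cases hA : G.Adj i a
        · rw [show gDelta G (St.s i) a = St.t i by simp [gDelta, hia, hA]] at hi'
          rw [t_fix] at hi'; exact absurd hi' (by simp)
        · by_cases hB : G.Adj j a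
          · rw [show gDelta G (St.s j) a = St.t j by simp [gDelta, hja, hB]] at hj'
            rw [t_fix] at hj'; exact absurd hj' (by simp)
          · rw [show gDelta G (St.s i) a = St.s i by simp [gDelta, hia, hA]] at hi'
            rw [show gDelta G (St.s j) a = St.s j by simp [gDelta, hja, hB]] at hj'
            exact ih i j hadj hi' hj'

lemma sync_to_f (i : Fin p) : ∀ l : List (Fin p), i ∈ l →
    (∀ j ∈ l, ¬ G.Adj i j) →
    deltaStar (gDelta G) (St.s i) l = St.f := by
  intro l
  induction l with
  | nil => simp
  | cons a l ih =>
    intro hi hind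
    show deltaStar (gDelta G) (gDelta G (St.s i) a) l = St.f
    by_cases hia : i = a
    · rw [show gDelta G (St.s i) a = St.f by simp [gDelta, hia]]; exact f_fix G l
    · have hA : ¬ G.Adj i a := hind a (by simp)
      rw [show gDelta G (St.s i) a = St.s i by simp [gDelta, hia, hA]]
      exact ih (by rcases List.mem_cons.1 hi with h | h; exact absurd h hia; exact h)
        (fun j hj => hind j (List.mem_cons_of_mem _ hj))

/-- The maximum size of a synchronizing set in the automaton built from G
equals α(G) + 1, where α(G) is the independence number of G. -/
theorem stmt_9 {p : ℕ} (G : SimpleGraph (Fin p)) [DecidableRel G.Adj] (α : ℕ)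
    (hα : IsGreatest {k | ∃ I : Finset (Fin p),
      (I : Set (Fin p)).Pairwise (fun a b => ¬ G.Adj a b) ∧ I.card = k} α)
    (hα1 : 1 ≤ α) :
    IsGreatest {k | ∃ S : Finset (St p),
      IsSyncSet (gDelta G) (↑S : Set (St p)) ∧ S.card = k} (α + 1) := by
  obtain ⟨⟨I, hInd, hIcard⟩, hub⟩ := hα
  constructor
  · -- membership: the set {f} ∪ {s_i : i ∈ I} is synchronizing of size α + 1
    refine ⟨insert St.f (I.image St.s), ⟨I.toList, St.f, ?_⟩, ?_⟩
    · intro x hx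
      simp only [Finset.coe_insert, Set.mem_insert_iff, Finset.coe_image, Set.mem_image,
        Finset.mem_coe] at hx
      rcases hx with rfl | ⟨i, hi, rfl⟩
      · exact f_fix G _
      · refine sync_to_f G i _ (Finset.mem_toList.2 hi) ?_
        intro j hj
        have hjI : j ∈ I := Finset.mem_toList.1 hj
        by_cases hij : i = j
        · subst hij; exact G.irrefl
        · exact hInd (Finset.mem_coe.2 hi) (Finset.mem_coe.2 hjI) hij
    · rw [Finset.card_insert_of_notMem (by simp),
        Finset.card_image_of_injective _ (fun a b h => by injection h), hIcard]
  · -- upper bound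
    rintro k ⟨S, ⟨w, q, hsync⟩, rfl⟩
    cases q with
    | s m =>
      have hS : S ⊆ {St.s m} := by
        intro x hx
        have h := hsync x (Finset.mem_coe.2 hx)
        cases x with
        | s i =>
          rcases s_cases G i w with h' | h' | h' <;> rw [h'] at h
          · simp [h]
          · exact absurd h (by simp)
          · exact absurd h (by simp)
        | t i => rw [t_fix] at h; exact absurd h (by simp)
        | f => rw [f_fix] at h; exact absurd h (by simp)
      have := Finset.card_le_card hS
      simp only [Finset.card_singleton] at this
      omega
    | t m =>
      have hS : S ⊆ {St.s m, St.t m} := by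
        intro x hx
        have h := hsync x (Finset.mem_coe.2 hx)
        cases x with
        | s i =>
          rcases s_cases G i w with h' | h' | h' <;> rw [h'] at h
          · exact absurd h (by simp)
          · simp only [St.t.injEq] at h; subst h; simp
          · exact absurd h (by simp)
        | t i =>
          rw [t_fix] at h
          simp only [St.t.injEq] at h; subst h; simp
        | f => rw [f_fix] at h; exact absurd h (by simp)
      have h2 := Finset.card_le_card hS
      have : ({St.s m, St.t m} : Finset (St p)).card ≤ 2 := Finset.card_insert_le _ _ |>.trans (by simp)
      omega
    | f =>
      classical
      set J : Finset (Fin p) :=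
        Finset.univ.filter (fun i => deltaStar (gDelta G) (St.s i) w = St.f) with hJdef
      have hJind : (J : Set (Fin p)).Pairwise (fun a b => ¬ G.Adj a b) := by
        intro a ha b hb hab hadj
        have ha' : deltaStar (gDelta G) (St.s a) w = St.f := by
          simpa [hJdef] using ha
        have hb' : deltaStar (gDelta G) (St.s b) w = St.f := by
          simpa [hJdef] using hb
        exact no_two_adj G w a b hadj ha' hb'
      have hJcard : J.card ≤ α := hub ⟨J, hJind, rfl⟩
      have hS : S ⊆ insert St.f (J.image St.s) := by
        intro x hx
        have h := hsync x (Finset.mem_coe.2 hx)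
        cases x with
        | s i =>
          refine Finset.mem_insert_of_mem (Finset.mem_image.2 ⟨i, ?_, rfl⟩)
          simp [hJdef, h]
        | t i => rw [t_fix] at h; exact absurd h (by simp)
        | f => exact Finset.mem_insert_self _ _
      have h2 := Finset.card_le_card hS
      have h3 : (insert St.f (J.image St.s)).card ≤ J.card + 1 :=
        (Finset.card_insert_le _ _).trans (by
          have := Finset.card_image_le (f := St.s) (s := J); omega)
      omega
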